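/- Every nontrivial congruence θ of the line L_n equals the relation ⟨k; r̄⟩ restricted to {0,...,n}, where k is the step of θ (i.e., |L_n/θ| − 1) and r̄ enumerates in increasing order the set {x : x θ x+1}. -/

import Mathlib

/-- The accessibility relation of the line `L_n`: universe `{0,…,n}`, `x R y ↔ |x-y| ≤ 1`. -/
def lineR (n x y : ℕ) : Prop := x ≤ n ∧ y ≤ n ∧ x ≤ y + 1 ∧ y ≤ x + 1

/-- A congruence of the line `L_n`: an equivalence relation on `{0,…,n}` that is a bisimulation. -/
structure LineCong (n : ℕ) : Type where
  rel : ℕ → ℕ → Prop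
  refl : ∀ x, x ≤ n → rel x x
  symm : ∀ {x y}, rel x y → rel y x
  trans : ∀ {x y z}, rel x y → rel y z → rel x z
  dom : ∀ {x y}, rel x y → x ≤ n ∧ y ≤ n
  bisim : ∀ {x x' y}, rel x' x → lineR n x y → ∃ y', lineR n x' y' ∧ rel y' y

/-- The equivalence class `x/θ`. -/
def cls {n : ℕ} (θ : LineCong n) (x : ℕ) : Set ℕ := {y | θ.rel x y}

/-- The set of equivalence classes of `θ`. -/
def classes {n : ℕ} (θ : LineCong n) : Set (Set ℕ) := {S | ∃ x, x ≤ n ∧ S = cls θ x}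

/-- `qrel θ x y` holds iff `x/θ R_θ y/θ` in the quotient frame. -/
def qrel {n : ℕ} (θ : LineCong n) (x y : ℕ) : Prop :=
  ∃ x' y', θ.rel x' x ∧ θ.rel y' y ∧ lineR n x' y'

/-- `vq θ x` is the number of `R_θ`-successor classes of `x/θ` in the quotient frame. -/
noncomputable def vq {n : ℕ} (θ : LineCong n) (x : ℕ) : ℕ :=
  {S : Set ℕ | ∃ y, qrel θ x y ∧ S = cls θ y}.ncard

/-- `θ` is trivial: it has exactly one class. -/
def TrivialCong {n : ℕ} (θ : LineCong n) : Prop := ∀ x y, x ≤ n → y ≤ n → θ.rel x y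

/-- The step of `θ`: the number of classes minus one. -/
noncomputable def stepC {n : ℕ} (θ : LineCong n) : ℕ := (classes θ).ncard - 1

/-- `e` is an extreme of `θ`: its class is an endpoint of the quotient line. -/
def IsExtremeC {n : ℕ} (θ : LineCong n) (e : ℕ) : Prop := e ≤ n ∧ vq θ e ≤ 2

/-- The join of two congruences: the transitive closure of their union. -/
def joinRel {n : ℕ} (θ δ : LineCong n) : ℕ → ℕ → Prop :=
  Relation.TransGen (fun x y => θ.rel x y ∨ δ.rel x y)

/-- Inclusion of congruences. -/
def LeCong {n : ℕ} (θ δ : LineCong n) : Prop := ∀ x y, θ.rel x y → δ.rel x y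

/-- The frequency of `θ` : `|ext(θ)| - (number of rests) - 1`. -/
noncomputable def freqC {n : ℕ} (θ : LineCong n) : ℕ :=
  {e | IsExtremeC θ e}.ncard - {r | θ.rel r (r + 1)}.ncard - 1

/-- `Δ_r̄(x) = |{i : r_i < x}|`. -/
def deltaFn (m : ℕ) (r : Fin m → ℕ) (x : ℤ) : ℤ :=
  ((Finset.univ.filter (fun i => (r i : ℤ) < x)).card : ℤ)

/-- The relation `⟨k; r̄⟩` on `ℤ`:
`x ∼ y ↔ x - Δ(x) ≡ ±(y - Δ(y)) (mod 2k)`. -/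
def conr (k m : ℕ) (r : Fin m → ℕ) (x y : ℤ) : Prop :=
  x - deltaFn m r x ≡ y - deltaFn m r y [ZMOD (2 * (k : ℤ))] ∨
  x - deltaFn m r x ≡ -(y - deltaFn m r y) [ZMOD (2 * (k : ℤ))]


namespace Stmt7Aux

/-- triangle wave of period 2k -/
def tri (k t : ℕ) : ℕ := min (t % (2*k)) (2*k - t % (2*k))

lemma tri_le (k t : ℕ) : tri k t ≤ k := by
  unfold tri
  rcases Nat.eq_zero_or_pos k with h | h
  · subst h; simp
  · have := Nat.mod_lt t (show 0 < 2*k by omega)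
    omega

lemma tri_zero (k : ℕ) : tri k 0 = 0 := by
  unfold tri; simp

lemma tri_eq_zero_iff (k t : ℕ) (hk : 1 ≤ k) : tri k t = 0 ↔ t % (2*k) = 0 := by
  unfold tri
  have h : t % (2*k) < 2*k := Nat.mod_lt _ (by omega)
  omega

lemma tri_eq_k_iff (k t : ℕ) (hk : 1 ≤ k) : tri k t = k ↔ t % (2*k) = k := by
  unfold tri
  have h : t % (2*k) < 2*k := Nat.mod_lt _ (by omega)
  omega

lemma mod_succ (k t : ℕ) (hk : 1 ≤ k) :
    (t+1) % (2*k) = t % (2*k) + 1 ∨ (t % (2*k) = 2*k - 1 ∧ (t+1) % (2*k) = 0) := by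
  have h : t % (2*k) < 2*k := Nat.mod_lt _ (by omega)
  rcases Nat.lt_or_ge (t % (2*k)) (2*k - 1) with h1 | h1
  · left
    conv_lhs => rw [← Nat.div_add_mod t (2*k)]
    rw [Nat.add_assoc, Nat.mul_add_mod]
    exact Nat.mod_eq_of_lt (by omega)
  · right
    have h2 : t % (2*k) = 2*k - 1 := by omega
    refine ⟨h2, ?_⟩
    conv_lhs => rw [← Nat.div_add_mod t (2*k)]
    rw [Nat.add_assoc, Nat.mul_add_mod, h2]
    have : 2*k - 1 + 1 = 2*k := by omega
    rw [this, Nat.mod_self]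

lemma tri_step (k t : ℕ) (hk : 1 ≤ k) :
    tri k (t+1) = tri k t + 1 ∨ tri k t = tri k (t+1) + 1 := by
  have h : t % (2*k) < 2*k := Nat.mod_lt _ (by omega)
  rcases mod_succ k t hk with h1 | ⟨h1, h2⟩ <;> unfold tri <;> omega

lemma tri_succ_of_zero (k t : ℕ) (hk : 1 ≤ k) (h : tri k t = 0) : tri k (t+1) = 1 := by
  have h' : t % (2*k) = 0 := (tri_eq_zero_iff k t hk).mp h
  have h2 : t % (2*k) < 2*k := Nat.mod_lt _ (by omega)
  rcases mod_succ k t hk with h1 | ⟨h1, _⟩ <;> unfold tri <;> omega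

lemma tri_succ_of_k (k t : ℕ) (hk : 1 ≤ k) (h : tri k t = k) : tri k (t+1) = k - 1 := by
  have h' : t % (2*k) = k := (tri_eq_k_iff k t hk).mp h
  rcases mod_succ k t hk with h1 | ⟨h1, h2⟩ <;> unfold tri <;> omega

lemma tri_linear (k t : ℕ) (hk : 1 ≤ k) (ht : 1 ≤ t) (h0 : 0 < tri k t) (h1 : tri k t < k) :
    tri k (t+1) + tri k (t-1) = 2 * tri k t := by
  obtain ⟨s, rfl⟩ : ∃ s, t = s + 1 := ⟨t - 1, by omega⟩
  have hs : s % (2*k) < 2*k := Nat.mod_lt _ (by omega)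
  have hss : (s+1) % (2*k) < 2*k := Nat.mod_lt _ (by omega)
  simp only [Nat.add_sub_cancel]
  rcases mod_succ k s hk with hA | ⟨hA, hA'⟩ <;>
    rcases mod_succ k (s+1) hk with hB | ⟨hB, hB'⟩ <;> unfold tri at * <;> omega

lemma tri_eq_tri_iff (k s t : ℕ) (hk : 1 ≤ k) :
    tri k s = tri k t ↔ (s % (2*k) = t % (2*k) ∨ (s + t) % (2*k) = 0) := by
  have hs : s % (2*k) < 2*k := Nat.mod_lt _ (by omega)
  have ht : t % (2*k) < 2*k := Nat.mod_lt _ (by omega)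
  have hst : (s + t) % (2*k) = (s % (2*k) + t % (2*k)) % (2*k) := by
    rw [Nat.add_mod]
  have h2 : s % (2*k) + t % (2*k) < 2*(2*k) := by omega
  have h3 : (s % (2*k) + t % (2*k)) % (2*k) =
      if s % (2*k) + t % (2*k) < 2*k then s % (2*k) + t % (2*k)
      else s % (2*k) + t % (2*k) - 2*k := by
    split
    · exact Nat.mod_eq_of_lt (by omega)
    · rw [Nat.mod_eq_sub_mod (by omega)]
      exact Nat.mod_eq_of_lt (by omega)
  unfold tri
  split at h3 <;> omega


variable {n : ℕ}

lemma lineR_symm {x y : ℕ} (h : lineR n x y) : lineR n y x := ⟨h.2.1, h.1, h.2.2.2, h.2.2.1⟩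

lemma lineR_self {x : ℕ} (h : x ≤ n) : lineR n x x := ⟨h, h, by omega, by omega⟩

lemma lineR_succ {x : ℕ} (h : x + 1 ≤ n) : lineR n x (x+1) := ⟨by omega, h, by omega, by omega⟩

lemma qrel_symm {θ : LineCong n} {x y : ℕ} (h : qrel θ x y) : qrel θ y x := by
  obtain ⟨a, b, ha, hb, hab⟩ := h
  exact ⟨b, a, hb, ha, lineR_symm hab⟩

lemma qrel_congr_right {θ : LineCong n} {z x y : ℕ} (h : qrel θ z x) (hxy : θ.rel x y) :
    qrel θ z y := by
  obtain ⟨a, b, ha, hb, hab⟩ := h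
  exact ⟨a, b, ha, θ.trans hb hxy, hab⟩

lemma qrel_dom {θ : LineCong n} {x y : ℕ} (h : qrel θ x y) : x ≤ n ∧ y ≤ n := by
  obtain ⟨a, b, ha, hb, _⟩ := h
  exact ⟨(θ.dom ha).2, (θ.dom hb).2⟩

/-- Every point of the class of `u` has a neighbour in the class of `v`,
provided the classes are `qrel`-related. -/
lemma NB {θ : LineCong n} {u v u' : ℕ} (h : qrel θ u v) (hu : θ.rel u u') :
    ∃ w, lineR n u' w ∧ θ.rel w v := by
  obtain ⟨a, b, ha, hb, hab⟩ := h
  have h1 : θ.rel u' a := θ.trans (θ.symm hu) (θ.symm ha)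
  obtain ⟨y', hy1, hy2⟩ := θ.bisim h1 hab
  exact ⟨y', hy1, θ.trans hy2 hb⟩

/-- Iterated quotient reachability from the class of `0`. -/
def QIter (θ : LineCong n) : ℕ → ℕ → Prop
  | 0, x => θ.rel 0 x
  | (t+1), x => ∃ z, QIter θ t z ∧ qrel θ z x

lemma QIter_dom {θ : LineCong n} {t x : ℕ} (h : QIter θ t x) : x ≤ n := by
  cases t with
  | zero => exact (θ.dom h).2
  | succ t => obtain ⟨z, _, hq⟩ := h; exact (qrel_dom hq).2

lemma QIter_congr {θ : LineCong n} {t x y : ℕ} (h : QIter θ t x) (hxy : θ.rel x y) :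
    QIter θ t y := by
  cases t with
  | zero => exact θ.trans h hxy
  | succ t => obtain ⟨z, hz, hq⟩ := h; exact ⟨z, hz, qrel_congr_right hq hxy⟩

lemma qrel_step {θ : LineCong n} {x : ℕ} (h : x + 1 ≤ n) : qrel θ x (x+1) :=
  ⟨x, x+1, θ.refl x (by omega), θ.refl (x+1) h, lineR_succ h⟩

lemma exQ (θ : LineCong n) : ∀ x, x ≤ n → ∃ t, QIter θ t x := by
  intro x
  induction x with
  | zero => intro h; exact ⟨0, θ.refl 0 h⟩
  | succ x ih =>
    intro h
    obtain ⟨t, ht⟩ := ih (by omega)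
    exact ⟨t+1, x, ht, qrel_step h⟩

noncomputable def D (θ : LineCong n) (x : ℕ) : ℕ := sInf {t | QIter θ t x}

lemma D_spec {θ : LineCong n} {x : ℕ} (hx : x ≤ n) : QIter θ (D θ x) x :=
  Nat.sInf_mem (exQ θ x hx)

lemma D_le {θ : LineCong n} {t x : ℕ} (h : QIter θ t x) : D θ x ≤ t :=
  Nat.sInf_le h

lemma rel_D_eq {θ : LineCong n} {x y : ℕ} (h : θ.rel x y) : D θ x = D θ y := by
  have hx := (θ.dom h).1
  have hy := (θ.dom h).2
  exact Nat.le_antisymm (D_le (QIter_congr (D_spec hy) (θ.symm h)))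
    (D_le (QIter_congr (D_spec hx) h))

lemma D_zero (θ : LineCong n) : D θ 0 = 0 := by
  rcases Nat.eq_zero_or_pos n with h | h
  · exact Nat.le_antisymm (D_le (show QIter θ 0 0 from θ.refl 0 (by omega))) (Nat.zero_le _)
  · exact Nat.le_antisymm (D_le (show QIter θ 0 0 from θ.refl 0 (by omega))) (Nat.zero_le _)

lemma D_zero_rel {θ : LineCong n} {x : ℕ} (hx : x ≤ n) (h : D θ x = 0) : θ.rel 0 x := by
  have := D_spec (θ := θ) hx
  rwa [h] at this

lemma D_adj {θ : LineCong n} {x y : ℕ} (h : lineR n x y) : D θ y ≤ D θ x + 1 :=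
  D_le ⟨x, D_spec h.1, ⟨x, y, θ.refl x h.1, θ.refl y h.2.1, h⟩⟩

lemma D_succ_exists {θ : LineCong n} {x t : ℕ} (hx : x ≤ n) (h : D θ x = t + 1) :
    ∃ v, v ≤ n ∧ D θ v = t ∧ qrel θ v x := by
  have hs := D_spec (θ := θ) hx
  rw [h] at hs
  obtain ⟨z, hz, hq⟩ := hs
  have h1 : D θ z ≤ t := D_le hz
  have h2 : D θ x ≤ D θ z + 1 := D_le ⟨z, D_spec (QIter_dom hz), hq⟩
  exact ⟨z, QIter_dom hz, by omega, hq⟩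

/-- points whose classes are at equal distance from the class of 0 are related -/
lemma D_unique {θ : LineCong n} : ∀ t x y, x ≤ n → y ≤ n → D θ x = t → D θ y = t → θ.rel x y := by
  intro t
  induction t using Nat.strong_induction_on with
  | _ t ih =>
    intro x y hx hy hdx hdy
    match t, ih with
    | 0, _ => exact θ.trans (θ.symm (D_zero_rel hx hdx)) (D_zero_rel hy hdy)
    | (t+1), ih =>
      obtain ⟨v, hv, hDv, hqvx⟩ := D_succ_exists hx hdx
      obtain ⟨w, hw, hDw, hqwy⟩ := D_succ_exists hy hdy
      have hvw : θ.rel v w := ih t (by omega) v w hv hw hDv hDw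
      match t with
      | 0 =>
        have h0v : θ.rel 0 v := D_zero_rel hv hDv
        obtain ⟨a, hla, hax⟩ := NB hqvx (θ.symm h0v)
        obtain ⟨b, hlb, hby⟩ := NB hqwy (θ.trans (θ.symm hvw) (θ.symm h0v))
        have hDa : D θ a = 1 := by rw [rel_D_eq hax, hdx]
        have hDb : D θ b = 1 := by rw [rel_D_eq hby, hdy]
        have hD0 : D θ 0 = 0 := D_zero θ
        have e1 : a = 1 := by
          have : a ≠ 0 := fun h => by rw [h, hD0] at hDa; omega
          rcases hla with ⟨_, _, h1, h2⟩; omega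
        have e2 : b = 1 := by
          have : b ≠ 0 := fun h => by rw [h, hD0] at hDb; omega
          rcases hlb with ⟨_, _, h1, h2⟩; omega
        rw [e1] at hax; rw [e2] at hby
        exact θ.trans (θ.symm hax) hby
      | (t+1) =>
        obtain ⟨a, hla, hax⟩ := NB hqvx (θ.refl v hv)
        obtain ⟨b, hlb, hby⟩ := NB hqwy (θ.symm hvw)
        have hDa : D θ a = t + 2 := by rw [rel_D_eq hax, hdx]
        have hDb : D θ b = t + 2 := by rw [rel_D_eq hby, hdy]
        obtain ⟨u, hu, hDu, hq_uv⟩ := D_succ_exists hv hDv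
        obtain ⟨c, hlc, hcu⟩ := NB (qrel_symm hq_uv) (θ.refl v hv)
        have hDc : D θ c = t := by rw [rel_D_eq hcu, hDu]
        have hDvv : D θ v = t + 1 := hDv
        have e1 : a = v + 1 ∨ a + 1 = v := by
          have : a ≠ v := fun h => by rw [h, hDvv] at hDa; omega
          rcases hla with ⟨_, _, h1, h2⟩; omega
        have e2 : b = v + 1 ∨ b + 1 = v := by
          have : b ≠ v := fun h => by rw [h, hDvv] at hDb; omega
          rcases hlb with ⟨_, _, h1, h2⟩; omega
        have e3 : c = v + 1 ∨ c + 1 = v := by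
          have : c ≠ v := fun h => by rw [h, hDvv] at hDc; omega
          rcases hlc with ⟨_, _, h1, h2⟩; omega
        have e4 : c ≠ a := fun h => by rw [h, hDa] at hDc; omega
        have e5 : c ≠ b := fun h => by rw [h, hDb] at hDc; omega
        have hab : a = b := by omega
        subst hab
        exact θ.trans (θ.symm hax) hby


lemma cls_eq_of_rel {θ : LineCong n} {x y : ℕ} (h : θ.rel x y) : cls θ x = cls θ y :=
  Set.ext fun z => ⟨fun hz => θ.trans (θ.symm h) hz, fun hz => θ.trans h hz⟩

lemma psi_cls (θ : LineCong n) {x : ℕ} (hx : x ≤ n) : D θ (sInf (cls θ x)) = D θ x := by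
  have hmem : sInf (cls θ x) ∈ cls θ x := Nat.sInf_mem ⟨x, θ.refl x hx⟩
  exact (rel_D_eq hmem).symm

lemma downward_closed {S : Set ℕ} (hd : ∀ t, t + 1 ∈ S → t ∈ S) :
    ∀ x ∈ S, ∀ j ≤ x, j ∈ S := by
  intro x
  induction x with
  | zero => intro hx j hj; have : j = 0 := by omega
            rwa [this]
  | succ x ih =>
    intro hx j hj
    rcases Nat.lt_or_ge j (x+1) with h | h
    · exact ih (hd x hx) j (by omega)
    · have : j = x + 1 := by omega
      rwa [this]

lemma image_eq_Iic (θ : LineCong n) (k : ℕ) (hcard : (classes θ).ncard = k + 1) :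
    D θ '' Set.Iic n = Set.Iic k := by
  set S := D θ '' Set.Iic n with hS
  have hfin : S.Finite := (Set.finite_Iic n).image _
  have h0 : (0 : ℕ) ∈ S := ⟨0, by simp, D_zero θ⟩
  have hdc : ∀ t, t + 1 ∈ S → t ∈ S := by
    rintro t ⟨x, hx, hDx⟩
    obtain ⟨v, hv, hDv, -⟩ := D_succ_exists (Set.mem_Iic.mp hx) hDx
    exact ⟨v, Set.mem_Iic.mpr hv, hDv⟩
  have hbdd := hfin.bddAbove
  have hne : S.Nonempty := ⟨0, h0⟩
  have hM : sSup S ∈ S := Nat.sSup_mem hne hbdd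
  have hSM : S = Set.Iic (sSup S) := by
    apply subset_antisymm
    · exact fun x hx => le_csSup hbdd hx
    · exact fun j hj => downward_closed hdc (sSup S) hM j hj
  have hclasses : classes θ = cls θ '' Set.Iic n := by
    ext T
    constructor
    · rintro ⟨x, hx, rfl⟩; exact ⟨x, Set.mem_Iic.mpr hx, rfl⟩
    · rintro ⟨x, hx, rfl⟩; exact ⟨x, Set.mem_Iic.mp hx, rfl⟩
  have hSψ : S = (fun T => D θ (sInf T)) '' classes θ := by
    rw [hclasses, Set.image_image, hS]
    exact (Set.image_congr fun x hx => (psi_cls θ (Set.mem_Iic.mp hx))).symm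
  have hinj : Set.InjOn (fun T => D θ (sInf T)) (classes θ) := by
    rintro S1 hS1 S2 hS2 h
    obtain ⟨x, hx, rfl⟩ := hS1
    obtain ⟨y, hy, rfl⟩ := hS2
    simp only [psi_cls θ hx, psi_cls θ hy] at h
    exact cls_eq_of_rel (D_unique (D θ y) x y hx hy h rfl)
  have hcardS : S.ncard = k + 1 := by
    rw [hSψ, Set.ncard_image_of_injOn hinj, hcard]
  rw [hSM] at hcardS
  have hcardS' : (Set.Iic (sSup S)).ncard = sSup S + 1 := by
    rw [← Finset.coe_Iic, Set.ncard_coe_finset]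
    exact Nat.card_Iic _
  have : sSup S = k := by omega
  rw [hSM, this]


lemma D_le_k {θ : LineCong n} {k : ℕ} (hIm : D θ '' Set.Iic n = Set.Iic k) {x : ℕ}
    (hx : x ≤ n) : D θ x ≤ k := by
  have : D θ x ∈ Set.Iic k := hIm ▸ ⟨x, Set.mem_Iic.mpr hx, rfl⟩
  exact Set.mem_Iic.mp this

/-- a point whose class is at level `j < k` has a neighbour at level `j+1`. -/
lemma level_up {θ : LineCong n} {k : ℕ} (hIm : D θ '' Set.Iic n = Set.Iic k) {x j : ℕ}
    (hx : x ≤ n) (hj : D θ x = j) (hjk : j < k) : ∃ w, lineR n x w ∧ D θ w = j + 1 := by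
  have hmem : j + 1 ∈ D θ '' Set.Iic n := hIm ▸ Set.mem_Iic.mpr (by omega)
  obtain ⟨y, hy, hDy⟩ := hmem
  obtain ⟨v, hv, hDv, hqvy⟩ := D_succ_exists (Set.mem_Iic.mp hy) hDy
  have hvx : θ.rel v x := D_unique j v x hv hx hDv hj
  obtain ⟨w, hlw, hwy⟩ := NB hqvy hvx
  exact ⟨w, hlw, by rw [rel_D_eq hwy, hDy]⟩

/-- a point whose class is at level `j+1` has a neighbour at level `j`. -/
lemma level_down {θ : LineCong n} {x j : ℕ} (hx : x ≤ n) (hj : D θ x = j + 1) :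
    ∃ w, lineR n x w ∧ D θ w = j := by
  obtain ⟨v, hv, hDv, hqvx⟩ := D_succ_exists hx hj
  obtain ⟨w, hlw, hwv⟩ := NB (qrel_symm hqvx) (θ.refl x hx)
  exact ⟨w, hlw, by rw [rel_D_eq hwv, hDv]⟩

/-- rests live only at the endpoints of the quotient line. -/
lemma rest_level {θ : LineCong n} {k : ℕ} (hIm : D θ '' Set.Iic n = Set.Iic k) {x : ℕ}
    (hx : x + 1 ≤ n) (h : θ.rel x (x + 1)) : D θ x = 0 ∨ D θ x = k := by
  by_contra hcon
  push_neg at hcon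
  set j := D θ x with hj
  have hj1 : 1 ≤ j := by omega
  have hjk : j < k := by
    have := D_le_k hIm (show x ≤ n by omega)
    omega
  have hD1 : D θ (x + 1) = j := (rel_D_eq h).symm
  obtain ⟨w, hlw, hDw⟩ := level_down (show x ≤ n by omega) (show D θ x = (j-1)+1 by omega)
  obtain ⟨w', hlw', hDw'⟩ := level_up hIm (show x ≤ n by omega) hj.symm hjk
  have ew : w + 1 = x := by
    have h1 : w ≠ x := fun hh => by rw [hh] at hDw; omega
    have h2 : w ≠ x + 1 := fun hh => by rw [hh, hD1] at hDw; omega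
    rcases hlw with ⟨_, _, _, _⟩; omega
  have ew' : w' = x + 1 ∨ w' + 1 = x := by
    have h1 : w' ≠ x := fun hh => by rw [hh] at hDw'; omega
    rcases hlw' with ⟨_, _, _, _⟩; omega
  rcases ew' with h | h
  · rw [h, hD1] at hDw'; omega
  · have : w' = w := by omega
    rw [this, hDw] at hDw'; omega

section Delta

variable (m : ℕ) (r : Fin m → ℕ)

/-- number of rests below `x` -/
noncomputable def delta (x : ℕ) : ℕ := (Finset.univ.filter (fun i => r i < x)).card

noncomputable def dfn (x : ℕ) : ℕ := x - delta m r x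

lemma delta_zero : delta m r 0 = 0 := by simp [delta]

lemma delta_le (hr : StrictMono r) (x : ℕ) : delta m r x ≤ x := by
  classical
  have : (Finset.univ.filter (fun i => r i < x)).card ≤ (Finset.range x).card := by
    apply Finset.card_le_card_of_injOn r
    · intro i hi
      simp only [Finset.mem_coe, Finset.mem_filter] at hi
      simpa using hi.2
    · exact fun a _ b _ h => hr.injective h
  simpa [delta] using this

lemma delta_succ_mem (hr : StrictMono r) {x : ℕ} (h : ∃ i, r i = x) :
    delta m r (x + 1) = delta m r x + 1 := by
  classical
  obtain ⟨i0, hi0⟩ := h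
  have hsplit : (Finset.univ.filter (fun i => r i < x + 1)) =
      (Finset.univ.filter (fun i => r i < x)) ∪ {i0} := by
    ext i
    simp only [Finset.mem_filter, Finset.mem_union, Finset.mem_singleton, Finset.mem_univ,
      true_and]
    constructor
    · intro hi
      rcases Nat.lt_or_ge (r i) x with h1 | h1
      · exact Or.inl h1
      · right
        have : r i = x := by omega
        exact hr.injective (by rw [this, hi0])
    · rintro (hi | rfl)
      · omega
      · omega
  have hdisj : Disjoint (Finset.univ.filter (fun i => r i < x)) ({i0} : Finset (Fin m)) := by
    rw [Finset.disjoint_singleton_right, Finset.mem_filter]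
    rintro ⟨-, hh⟩
    omega
  rw [delta, delta, hsplit, Finset.card_union_of_disjoint hdisj, Finset.card_singleton]

lemma delta_succ_notmem {x : ℕ} (h : ¬ ∃ i, r i = x) :
    delta m r (x + 1) = delta m r x := by
  classical
  have : (Finset.univ.filter (fun i => r i < x + 1)) =
      (Finset.univ.filter (fun i => r i < x)) := by
    ext i
    simp only [Finset.mem_filter, Finset.mem_univ, true_and]
    constructor
    · intro hi
      rcases Nat.lt_or_ge (r i) x with h1 | h1
      · exact h1
      · exact absurd ⟨i, by omega⟩ h
    · omega
  rw [delta, delta, this]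

end Delta


theorem D_eq_tri {θ : LineCong n} {k m : ℕ} {r : Fin m → ℕ} (hr : StrictMono r)
    (hrange : ∀ x : ℕ, (∃ i, r i = x) ↔ θ.rel x (x + 1))
    (hk1 : 1 ≤ k) (hIm : D θ '' Set.Iic n = Set.Iic k) :
    ∀ x, x ≤ n → D θ x = tri k (dfn m r x) := by
  intro x
  induction x using Nat.strong_induction_on with
  | _ x ih =>
    match x with
    | 0 =>
      intro _
      rw [dfn, delta_zero, D_zero θ, tri_zero]
    | (y+1) =>
      intro hyn
      have hy : y ≤ n := by omega
      have IHy : D θ y = tri k (dfn m r y) := ih y (by omega) hy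
      by_cases hrest : θ.rel y (y+1)
      · have hd : dfn m r (y+1) = dfn m r y := by
          rw [dfn, dfn, delta_succ_mem m r hr ((hrange y).mpr hrest)]
          have := delta_le m r hr y
          omega
        rw [hd, ← IHy, ← rel_D_eq hrest]
      · have hno : ¬ ∃ i, r i = y := fun h => hrest ((hrange y).mp h)
        have hd : dfn m r (y+1) = dfn m r y + 1 := by
          rw [dfn, dfn, delta_succ_notmem m r hno]
          have := delta_le m r hr y
          omega
        have hne : D θ (y+1) ≠ D θ y := fun h =>
          hrest (θ.symm (D_unique (D θ (y+1)) (y+1) y hyn hy rfl h.symm))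
        have hadj1 : D θ (y+1) ≤ D θ y + 1 := D_adj (lineR_succ hyn)
        have hadj2 : D θ y ≤ D θ (y+1) + 1 := D_adj (lineR_symm (lineR_succ hyn))
        rcases Nat.eq_zero_or_pos (D θ y) with hj0 | hjpos
        · have h1 : D θ (y+1) = 1 := by omega
          have h2 : tri k (dfn m r y) = 0 := by omega
          rw [h1, hd, tri_succ_of_zero k _ hk1 h2]
        · rcases Nat.lt_or_ge (D θ y) k with hjk | hjk
          · -- interior case 0 < D y < k
            have hy1 : 1 ≤ y := by
              rcases Nat.eq_zero_or_pos y with h | h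
              · exfalso; rw [h, D_zero θ] at hjpos; omega
              · exact h
            obtain ⟨z, rfl⟩ : ∃ z, y = z + 1 := ⟨y-1, by omega⟩
            have hz : z ≤ n := by omega
            have hzy : z + 1 + 1 ≤ n := hyn
            have hznr : ¬ θ.rel z (z+1) := by
              intro hzr
              have h1 : D θ z = D θ (z+1) := rel_D_eq hzr
              rcases rest_level hIm (show z+1 ≤ n by omega) hzr with h | h <;> omega
            have IHz : D θ z = tri k (dfn m r z) := ih z (by omega) hz
            have hnoz : ¬ ∃ i, r i = z := fun h => hznr ((hrange z).mp h)
            have hdz : dfn m r (z+1) = dfn m r z + 1 := by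
              rw [dfn, dfn, delta_succ_notmem m r hnoz]
              have := delta_le m r hr z
              omega
            have hza1 : D θ z ≤ D θ (z+1) + 1 :=
              D_adj (lineR_symm (lineR_succ (show z+1 ≤ n by omega)))
            have hza2 : D θ (z+1) ≤ D θ z + 1 := D_adj (lineR_succ (show z+1 ≤ n by omega))
            have hzne : D θ z ≠ D θ (z+1) := fun h =>
              hznr (D_unique (D θ z) z (z+1) hz (by omega) rfl h.symm)
            have htl : tri k (dfn m r (z+1) + 1) + tri k (dfn m r (z+1) - 1) =
                2 * tri k (dfn m r (z+1)) := by
              apply tri_linear k _ hk1 (by omega) (by omega) (by omega)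
            have htz : tri k (dfn m r (z+1) - 1) = D θ z := by
              rw [hdz, Nat.add_sub_cancel, IHz]
            rcases (show D θ z = D θ (z+1) - 1 ∨ D θ z = D θ (z+1) + 1 by omega) with hc | hc
            · -- going up : D (z+2) = D(z+1) + 1
              have hclaim : D θ (z+1+1) = D θ (z+1) + 1 := by
                by_contra hcc
                have hdown : D θ (z+1+1) = D θ (z+1) - 1 := by omega
                obtain ⟨w, hlw, hDw⟩ := level_up hIm (show z+1 ≤ n by omega) rfl hjk
                obtain ⟨hw1, hw2, hw3, hw4⟩ := hlw
                rcases (show w = z ∨ w = z+1 ∨ w = z+1+1 by omega) with rfl | rfl | rfl <;> omega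
              rw [hd, hclaim]
              omega
            · -- going down : D (z+2) = D(z+1) - 1
              have hclaim : D θ (z+1+1) = D θ (z+1) - 1 := by
                by_contra hcc
                have hup : D θ (z+1+1) = D θ (z+1) + 1 := by omega
                obtain ⟨w, hlw, hDw⟩ := level_down (show z+1 ≤ n by omega)
                  (show D θ (z+1) = (D θ (z+1) - 1) + 1 by omega)
                obtain ⟨hw1, hw2, hw3, hw4⟩ := hlw
                rcases (show w = z ∨ w = z+1 ∨ w = z+1+1 by omega) with rfl | rfl | rfl <;> omega
              rw [hd, hclaim]
              omega
          · -- D y = k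
            have hjk' : D θ y = k := le_antisymm (D_le_k hIm hy) hjk
            have hb : D θ (y+1) ≤ k := D_le_k hIm hyn
            have h1 : D θ (y+1) = k - 1 := by omega
            have h2 : tri k (dfn m r y) = k := by omega
            rw [h1, hd, tri_succ_of_k k _ hk1 h2]


lemma deltaFn_natCast (m : ℕ) (r : Fin m → ℕ) (x : ℕ) :
    deltaFn m r (x : ℤ) = (delta m r x : ℤ) := by
  classical
  unfold deltaFn delta
  congr 2
  apply Finset.filter_congr
  intro i _
  exact_mod_cast Iff.rfl

lemma cast_modeq (a b c : ℕ) : ((a : ℤ) ≡ (b : ℤ) [ZMOD (c : ℤ)]) ↔ a % c = b % c := by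
  unfold Int.ModEq
  rw [← Int.natCast_mod, ← Int.natCast_mod, Nat.cast_inj]

lemma cast_modeq_neg (a b c : ℕ) (hc : 0 < c) :
    ((a : ℤ) ≡ -(b : ℤ) [ZMOD (c : ℤ)]) ↔ (a + b) % c = 0 := by
  have e : (-(b : ℤ) - a) = -(((a + b : ℕ) : ℤ)) := by push_cast; ring
  rw [Int.modEq_iff_dvd, e, dvd_neg, Int.natCast_dvd_natCast]
  constructor
  · intro h; exact Nat.mod_eq_zero_of_dvd h
  · intro h; exact Nat.dvd_of_mod_eq_zero h

lemma conr_iff_tri {k m : ℕ} {r : Fin m → ℕ} (hr : StrictMono r) (hk1 : 1 ≤ k) (x y : ℕ) :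
    conr k m r (x : ℤ) (y : ℤ) ↔ tri k (dfn m r x) = tri k (dfn m r y) := by
  have hmod : (2 * (k : ℤ)) = ((2 * k : ℕ) : ℤ) := by push_cast; ring
  have hdx : ((x : ℤ) - deltaFn m r (x : ℤ)) = ((dfn m r x : ℕ) : ℤ) := by
    rw [deltaFn_natCast, dfn, Nat.cast_sub (delta_le m r hr x)]
  have hdy : ((y : ℤ) - deltaFn m r (y : ℤ)) = ((dfn m r y : ℕ) : ℤ) := by
    rw [deltaFn_natCast, dfn, Nat.cast_sub (delta_le m r hr y)]
  rw [tri_eq_tri_iff k _ _ hk1]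
  unfold conr
  rw [hdx, hdy, hmod, cast_modeq, cast_modeq_neg _ _ _ (by omega)]

end Stmt7Aux

open Stmt7Aux

/-- Every nontrivial congruence of `L_n` equals `⟨k; r̄⟩` restricted to `{0,…,n}`, where `k` is
its step and `r̄` enumerates the left parts of its rests in increasing order. -/
theorem stmt_7 (n : ℕ) (θ : LineCong n) (hnt : ¬ TrivialCong θ)
    (k : ℕ) (hk : k = stepC θ)
    (m : ℕ) (r : Fin m → ℕ) (hr : StrictMono r)
    (hrange : ∀ x : ℕ, (∃ i, r i = x) ↔ θ.rel x (x + 1)) :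
    ∀ x y : ℕ, x ≤ n → y ≤ n → (θ.rel x y ↔ conr k m r (x : ℤ) (y : ℤ)) := by
  classical
  have hclasses : classes θ = cls θ '' Set.Iic n := by
    ext T
    constructor
    · rintro ⟨x, hx, rfl⟩; exact ⟨x, Set.mem_Iic.mpr hx, rfl⟩
    · rintro ⟨x, hx, rfl⟩; exact ⟨x, Set.mem_Iic.mp hx, rfl⟩
  have hfin : (classes θ).Finite := by
    rw [hclasses]; exact (Set.finite_Iic n).image _
  obtain ⟨a, b, ha, hb, hab⟩ : ∃ a b, a ≤ n ∧ b ≤ n ∧ ¬ θ.rel a b := by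
    unfold TrivialCong at hnt
    push_neg at hnt
    obtain ⟨a, b, ha, hb, h⟩ := hnt
    exact ⟨a, b, ha, hb, h⟩
  have hclne : cls θ a ≠ cls θ b := by
    intro h
    have h1 : a ∈ cls θ a := θ.refl a ha
    rw [h] at h1
    exact hab (θ.symm h1)
  have h2le : 2 ≤ (classes θ).ncard := by
    have hsub : {cls θ a, cls θ b} ⊆ classes θ := by
      intro S hS
      rcases hS with rfl | rfl
      · exact ⟨a, ha, rfl⟩
      · exact ⟨b, hb, rfl⟩
    have := Set.ncard_le_ncard hsub hfin
    rwa [Set.ncard_pair hclne] at this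
  have hcard : (classes θ).ncard = k + 1 := by
    rw [hk, stepC]; omega
  have hk1 : 1 ≤ k := by omega
  have hIm := image_eq_Iic θ k hcard
  have hDt := D_eq_tri hr hrange hk1 hIm
  intro x y hx hy
  rw [conr_iff_tri hr hk1 x y]
  constructor
  · intro h
    rw [← hDt x hx, ← hDt y hy]
    exact congrArg (D θ) rfl ▸ rel_D_eq h
  · intro h
    refine D_unique (D θ y) x y hx hy ?_ rfl
    rw [hDt x hx, hDt y hy, h]
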